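/- Let T be an infinite locally finite tree. If Θ(T) is amenable, then T is amenable. -/
import Mathlib


open SimpleGraph Set

/-- The vertex boundary of a set `A` in a graph `G`. -/
def vbdry {V : Type*} (G : SimpleGraph V) (A : Set V) : Set V :=
  {v ∈ A | ∃ u ∉ A, G.Adj v u}

/-- A graph is amenable if its Cheeger constant is zero. -/
def Amenable {V : Type*} (G : SimpleGraph V) : Prop :=
  ∀ ε : ℝ, 0 < ε →
    ∃ A : Set V, A.Finite ∧ A.Nonempty ∧ ((vbdry G A).ncard : ℝ) ≤ ε * A.ncard

/-- The vertex set of the trimmed tree `Θ(T)`: the non-leaf vertices of `T`. -/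
def trimVerts {V : Type*} (T : SimpleGraph V) : Set V :=
  {v | (T.neighborSet v).ncard ≠ 1}

/-- If the trimmed tree `Θ(T)` of an infinite locally finite tree `T` is
(nonempty, infinite and) amenable, then `T` is amenable. -/
theorem amenable_of_trim_amenable {V : Type*} [Infinite V] (T : SimpleGraph V)
    (hT : T.IsTree) (hlf : ∀ v, (T.neighborSet v).Finite)
    (hinf : (trimVerts T).Infinite)
    (h : Amenable (T.induce (trimVerts T))) :
    Amenable T := by
  intro ε hε
  obtain ⟨A, hAfin, hAne, hAb⟩ := h ε hε
  classical
  set L : Set V := {u | (T.neighborSet u).ncard = 1 ∧ ∃ a ∈ A, T.Adj a.val u} with hL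
  set B : Set V := (Subtype.val '' A) ∪ L with hB
  have hLsub : L ⊆ ⋃ a ∈ A, T.neighborSet a.val := by
    rintro u ⟨-, a, ha, hadj⟩
    exact Set.mem_biUnion ha ((T.mem_neighborSet _ _).mpr hadj)
  have hLfin : L.Finite := ((hAfin.biUnion (fun a _ => hlf a.val)).subset hLsub)
  have hBfin : B.Finite := (hAfin.image _).union hLfin
  refine ⟨B, hBfin, ?_, ?_⟩
  · obtain ⟨a, ha⟩ := hAne
    exact ⟨a.val, Or.inl ⟨a, ha, rfl⟩⟩
  · have hsub : vbdry T B ⊆ Subtype.val '' (vbdry (T.induce (trimVerts T)) A) := by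
      rintro v ⟨hvB, u, huB, hadj⟩
      rcases hvB with ⟨a, haA, rfl⟩ | ⟨hv1, a, haA, hadj'⟩
      · have hu : u ∈ trimVerts T := by
          intro h1
          exact huB (Or.inr ⟨h1, a, haA, hadj⟩)
        refine ⟨a, ⟨haA, ⟨u, hu⟩, ?_, ?_⟩, rfl⟩
        · intro huA
          exact huB (Or.inl ⟨_, huA, rfl⟩)
        · exact hadj
      · exfalso
        obtain ⟨x, hx⟩ := Set.ncard_eq_one.mp hv1
        have h1 : a.val ∈ T.neighborSet v := hadj'.symm
        have h2 : u ∈ T.neighborSet v := hadj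
        rw [hx, Set.mem_singleton_iff] at h1 h2
        have : u = a.val := by rw [h1, h2]
        exact huB (by rw [this]; exact Or.inl ⟨a, haA, rfl⟩)
    have hvbAfin : (vbdry (T.induce (trimVerts T)) A).Finite :=
      hAfin.subset (fun x hx => hx.1)
    calc ((vbdry T B).ncard : ℝ)
        ≤ ((Subtype.val '' (vbdry (T.induce (trimVerts T)) A)).ncard : ℝ) := by
          exact_mod_cast Set.ncard_le_ncard hsub (hvbAfin.image _)
      _ = ((vbdry (T.induce (trimVerts T)) A).ncard : ℝ) := by
          rw [Set.ncard_image_of_injective _ Subtype.val_injective]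
      _ ≤ ε * A.ncard := hAb
      _ ≤ ε * B.ncard := by
          apply mul_le_mul_of_nonneg_left _ hε.le
          have : A.ncard = (Subtype.val '' A).ncard :=
            (Set.ncard_image_of_injective _ Subtype.val_injective).symm
          rw [this]
          exact_mod_cast Set.ncard_le_ncard Set.subset_union_left hBfin
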